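/- Let X be a locally compact separable metric space and let J be a symmetric nonnegative Radon measure on X×X∖diag. Let D be an algebra of bounded Borel measurable complex-valued functions on X such that D ∩ C_c(X) is uniformly dense in C_c(X) and such that df ∈ L²(X×X∖diag, J) for every f ∈ D. Then the space Ω¹(D), i.e. the linear span of the functions (x,y) ↦ f(x)(g(x) − g(y)) and (x,y) ↦ g(y)(f(x) − f(y)) with f, g ∈ D, is dense in L²(X×X∖diag, J). -/

import Mathlib

open MeasureTheory

open MeasureTheory MeasurableSpace Set Filter Topology
open scoped ENNReal NNReal

noncomputable section

set_option linter.unusedSectionVars false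

namespace ElemFormsAux

variable {X : Type*} [MetricSpace X] [TopologicalSpace.SeparableSpace X]
    [LocallyCompactSpace X] [MeasurableSpace X] [BorelSpace X]

abbrev Om (X : Type*) := {q : X × X // q.1 ≠ q.2}

lemma measurable_px : Measurable (fun ω : Om X => ω.1.1) :=
  measurable_fst.comp measurable_subtype_coe

lemma measurable_py : Measurable (fun ω : Om X => ω.1.2) :=
  measurable_snd.comp measurable_subtype_coe

lemma gen_eq :
    (inferInstance : MeasurableSpace (Om X)) = MeasurableSpace.generateFrom
      {S : Set (Om X) | ∃ A B : Set X, IsCompact A ∧ IsCompact B ∧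
        S = (Subtype.val : Om X → X × X) ⁻¹' (A ×ˢ B)} := by
  haveI : SecondCountableTopology X := UniformSpace.secondCountable_of_separable X
  have hK : (inferInstance : MeasurableSpace X)
      = MeasurableSpace.generateFrom {A : Set X | IsCompact A} := by
    refine le_antisymm ?_ (MeasurableSpace.generateFrom_le fun A hA => hA.isClosed.measurableSet)
    rw [BorelSpace.measurable_eq (α := X), borel_eq_generateFrom_isClosed]
    refine MeasurableSpace.generateFrom_le fun C hC => ?_
    have hCu : C = ⋃ n, C ∩ compactCovering X n := by
      rw [← inter_iUnion, iUnion_compactCovering, inter_univ]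
    rw [hCu]
    exact MeasurableSet.iUnion fun n => MeasurableSpace.measurableSet_generateFrom
      ((isCompact_compactCovering X n).inter_left hC)
  have hsp : IsCountablySpanning {A : Set X | IsCompact A} :=
    ⟨compactCovering X, fun n => isCompact_compactCovering X n, iUnion_compactCovering X⟩
  have hprod : (inferInstance : MeasurableSpace (X × X)) =
      MeasurableSpace.generateFrom
        (Set.image2 (· ×ˢ ·) {A : Set X | IsCompact A} {A : Set X | IsCompact A}) := by
    calc (inferInstance : MeasurableSpace (X × X))
        = @Prod.instMeasurableSpace X X
            (MeasurableSpace.generateFrom {A : Set X | IsCompact A})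
            (MeasurableSpace.generateFrom {A : Set X | IsCompact A}) := by rw [← hK]
      _ = _ := generateFrom_prod_eq hsp hsp
  calc (inferInstance : MeasurableSpace (Om X))
      = MeasurableSpace.comap Subtype.val (inferInstance : MeasurableSpace (X × X)) := rfl
    _ = _ := by
        rw [hprod, MeasurableSpace.comap_generateFrom]
        congr 1
        ext S
        constructor
        · rintro ⟨T, ⟨A, hA, B, hB, rfl⟩, rfl⟩
          exact ⟨A, B, hA, hB, rfl⟩
        · rintro ⟨A, B, hA, hB, rfl⟩
          exact ⟨A ×ˢ B, ⟨A, hA, B, hB, rfl⟩, rfl⟩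

lemma measurableSet_rect {A B : Set X} (hA : IsCompact A) (hB : IsCompact B) :
    MeasurableSet ((Subtype.val : Om X → X × X) ⁻¹' (A ×ˢ B)) :=
  (hA.isClosed.measurableSet.prod hB.isClosed.measurableSet).preimage measurable_subtype_coe

lemma setIntegral_zero_of_compactRect {J : Measure (Om X)} {φ : Om X → ℝ}
    (hφi : Integrable φ J)
    (h0 : ∀ A B : Set X, IsCompact A → IsCompact B →
      ∫ ω in (Subtype.val : Om X → X × X) ⁻¹' (A ×ˢ B), φ ω ∂J = 0) :
    ∀ S : Set (Om X), MeasurableSet S → ∫ ω in S, φ ω ∂J = 0 := by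
  haveI : SecondCountableTopology X := UniformSpace.secondCountable_of_separable X
  set μP := J.withDensity fun ω => ENNReal.ofReal (φ ω) with hμP
  set μN := J.withDensity fun ω => ENNReal.ofReal (-φ ω) with hμN
  have hbnd : ∀ (ψ : Om X → ℝ) (S : Set (Om X)), (∀ ω, |ψ ω| = |φ ω|) →
      ∫⁻ ω in S, ENNReal.ofReal (ψ ω) ∂J < ⊤ := by
    intro ψ S hψ
    refine lt_of_le_of_lt (le_trans (setLIntegral_le_lintegral _ _) ?_) hφi.2
    refine lintegral_mono fun ω => ?_
    calc ENNReal.ofReal (ψ ω) ≤ ENNReal.ofReal |ψ ω| := ENNReal.ofReal_le_ofReal (le_abs_self _)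
      _ = ENNReal.ofReal |φ ω| := by rw [hψ ω]
      _ = ‖φ ω‖ₑ := (Real.enorm_eq_ofReal_abs _).symm
  have hfinP : ∀ S, ∫⁻ ω in S, ENNReal.ofReal (φ ω) ∂J < ⊤ :=
    fun S => hbnd φ S (fun _ => rfl)
  have hfinN : ∀ S, ∫⁻ ω in S, ENNReal.ofReal (-φ ω) ∂J < ⊤ :=
    fun S => hbnd (fun ω => -φ ω) S (fun ω => abs_neg _)
  have key : ∀ S, MeasurableSet S → ((∫ ω in S, φ ω ∂J = 0) ↔ μP S = μN S) := by
    intro S hS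
    rw [hμP, hμN, withDensity_apply _ hS, withDensity_apply _ hS]
    have hparts := integral_eq_lintegral_pos_part_sub_lintegral_neg_part
      (hφi.integrableOn (s := S))
    constructor
    · intro h
      rw [h] at hparts
      have h' := sub_eq_zero.mp hparts.symm
      exact (ENNReal.toReal_eq_toReal_iff' (hfinP S).ne (hfinN S).ne).mp h'
    · intro h
      rw [hparts, h, sub_self]
  have hpi : IsPiSystem {S : Set (Om X) | ∃ A B : Set X, IsCompact A ∧ IsCompact B ∧
      S = (Subtype.val : Om X → X × X) ⁻¹' (A ×ˢ B)} := by
    rintro S ⟨A, B, hA, hB, rfl⟩ T ⟨A', B', hA', hB', rfl⟩ -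
    exact ⟨A ∩ A', B ∩ B', hA.inter_right hA'.isClosed, hB.inter_right hB'.isClosed,
      by rw [← preimage_inter, Set.prod_inter_prod]⟩
  haveI : IsFiniteMeasure μP := by
    constructor
    rw [hμP, withDensity_apply _ MeasurableSet.univ, setLIntegral_univ]
    have := hfinP univ; rwa [setLIntegral_univ] at this
  have hagree : ∀ S ∈ {S : Set (Om X) | ∃ A B : Set X, IsCompact A ∧ IsCompact B ∧
      S = (Subtype.val : Om X → X × X) ⁻¹' (A ×ˢ B)}, μP S = μN S := by
    rintro S ⟨A, B, hA, hB, rfl⟩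
    exact (key _ (measurableSet_rect hA hB)).mp (h0 A B hA hB)
  have huniv : μP univ = μN univ := by
    have hcov : (⋃ n, (Subtype.val : Om X → X × X) ⁻¹'
        (compactCovering X n ×ˢ compactCovering X n)) = univ := by
      ext ω
      simp only [mem_iUnion, mem_preimage, Set.mem_prod, mem_univ, iff_true]
      obtain ⟨n, hn⟩ := exists_mem_compactCovering ω.1.1
      obtain ⟨m, hm⟩ := exists_mem_compactCovering ω.1.2
      exact ⟨max n m, compactCovering_subset X (le_max_left _ _) hn,
        compactCovering_subset X (le_max_right _ _) hm⟩
    have hmono : Monotone (fun n => (Subtype.val : Om X → X × X) ⁻¹'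
        (compactCovering X n ×ˢ compactCovering X n)) := by
      intro a b hab
      exact preimage_mono (Set.prod_mono (compactCovering_subset X hab)
        (compactCovering_subset X hab))
    rw [← hcov, Directed.measure_iUnion hmono.directed_le,
      Directed.measure_iUnion hmono.directed_le]
    exact iSup_congr fun n => hagree _
      ⟨compactCovering X n, compactCovering X n, isCompact_compactCovering X n,
        isCompact_compactCovering X n, rfl⟩
  have hPN : μP = μN := ext_of_generate_finite _ gen_eq hpi hagree huniv
  intro S hS
  exact (key S hS).mpr (by rw [hPN])

lemma ae_zero_of_forall_setIntegral_zero {J : Measure (Om X)} {φ : Om X → ℝ}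
    (hφm : Measurable φ) (hφi : Integrable φ J)
    (h0 : ∀ S : Set (Om X), MeasurableSet S → ∫ ω in S, φ ω ∂J = 0) :
    φ =ᵐ[J] 0 := by
  have hup : ∀ ψ : Om X → ℝ, Measurable ψ → Integrable ψ J →
      (∀ S : Set (Om X), MeasurableSet S → ∫ ω in S, ψ ω ∂J = 0) →
      J {ω | 0 < ψ ω} = 0 := by
    intro ψ hm hi h
    have hU : {ω | 0 < ψ ω} = ⋃ n : ℕ, {ω | 1 / (n + 1 : ℝ) ≤ ψ ω} := by
      ext ω
      simp only [mem_setOf_eq, mem_iUnion]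
      constructor
      · intro hω
        obtain ⟨n, hn⟩ := exists_nat_one_div_lt hω
        exact ⟨n, hn.le⟩
      · rintro ⟨n, hn⟩
        exact lt_of_lt_of_le (by positivity) hn
    rw [hU]
    refine measure_iUnion_null fun n => ?_
    have hSm : MeasurableSet {ω | 1 / (n + 1 : ℝ) ≤ ψ ω} :=
      measurableSet_le measurable_const hm
    have hfin := hi.measure_ge_lt_top (show (0:ℝ) < 1 / (n + 1) by positivity)
    have hge := setIntegral_ge_of_const_le hSm hfin.ne (fun x hx => hx) hi.integrableOn
    rw [h _ hSm] at hge
    have htr : (J {ω | 1 / (n + 1 : ℝ) ≤ ψ ω}).toReal = 0 := by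
      have h1 : (0:ℝ) < 1 / (n + 1) := by positivity
      rw [smul_eq_mul, measureReal_def] at hge
      nlinarith [ENNReal.toReal_nonneg (a := J {ω | 1 / (n + 1 : ℝ) ≤ ψ ω})]
    exact ((ENNReal.toReal_eq_zero_iff _).mp htr).resolve_right hfin.ne
  have h1 := hup φ hφm hφi h0
  have h2 := hup (fun ω => -φ ω) hφm.neg hφi.neg
    (fun S hS => by rw [integral_neg, h0 S hS, neg_zero])
  rw [Filter.EventuallyEq, ae_iff]
  refine measure_mono_null (fun ω hω => ?_) (measure_union_null h1 h2)
  simp only [Pi.zero_apply, mem_setOf_eq] at hω ⊢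
  rcases lt_trichotomy (φ ω) 0 with h | h | h
  · exact Or.inr (by simpa using h)
  · exact absurd h hω
  · exact Or.inl h

lemma ae_zero_of_forall_compactRect {J : Measure (Om X)} {ρ : Om X → ℂ}
    (hρm : Measurable ρ) (hρi : Integrable ρ J)
    (h0 : ∀ A B : Set X, IsCompact A → IsCompact B →
      ∫ ω in (Subtype.val : Om X → X × X) ⁻¹' (A ×ˢ B), ρ ω ∂J = 0) :
    ρ =ᵐ[J] 0 := by
  have hre : (fun ω => (ρ ω).re) =ᵐ[J] 0 := by
    refine ae_zero_of_forall_setIntegral_zero (Complex.measurable_re.comp hρm) hρi.re ?_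
    refine setIntegral_zero_of_compactRect hρi.re ?_
    intro A B hA hB
    have h1 : ∫ ω in (Subtype.val : Om X → X × X) ⁻¹' (A ×ˢ B), RCLike.re (ρ ω) ∂J
        = RCLike.re (∫ ω in (Subtype.val : Om X → X × X) ⁻¹' (A ×ˢ B), ρ ω ∂J) :=
      integral_re hρi.integrableOn
    rw [h0 A B hA hB] at h1
    simpa using h1
  have him : (fun ω => (ρ ω).im) =ᵐ[J] 0 := by
    refine ae_zero_of_forall_setIntegral_zero (Complex.measurable_im.comp hρm) hρi.im ?_
    refine setIntegral_zero_of_compactRect hρi.im ?_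
    intro A B hA hB
    have h1 : ∫ ω in (Subtype.val : Om X → X × X) ⁻¹' (A ×ˢ B), RCLike.im (ρ ω) ∂J
        = RCLike.im (∫ ω in (Subtype.val : Om X → X × X) ⁻¹' (A ×ˢ B), ρ ω ∂J) :=
      integral_im hρi.integrableOn
    rw [h0 A B hA hB] at h1
    simpa using h1
  filter_upwards [hre, him] with ω hω1 hω2
  simp only [Pi.zero_apply] at hω1 hω2 ⊢
  exact Complex.ext hω1 hω2

end ElemFormsAux

end

open ElemFormsAux

/-- The swap map `(x,y) ↦ (y,x)` on `X × X ∖ diag`. -/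
def offDiagSwap {X : Type*} (p : {q : X × X // q.1 ≠ q.2}) : {q : X × X // q.1 ≠ q.2} :=
  ⟨(p.1.2, p.1.1), Ne.symm p.2⟩

/-- **Density of elementary 1-forms in `L²(X × X ∖ diag, J)`** (Lemma 3.1 of the paper).
Let `X` be a locally compact separable metric space and `J` a symmetric nonnegative Radon
measure on `X × X ∖ diag`. If `D` is an algebra of bounded Borel measurable complex
functions on `X` such that `D ∩ C_c(X)` is uniformly dense in `C_c(X)` and `df ∈ L²(J)`
for every `f ∈ D`, then the span of the elementary forms `g df` and `(df) g`, i.e. of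
`(x,y) ↦ f(x)(g(x) − g(y))` and `(x,y) ↦ g(y)(f(x) − f(y))` with `f, g ∈ D`, is dense in
`L²(X × X ∖ diag, J)`. -/
theorem elementary_one_forms_dense
    {X : Type*} [MetricSpace X] [TopologicalSpace.SeparableSpace X]
    [LocallyCompactSpace X] [MeasurableSpace X] [BorelSpace X]
    (J : Measure {q : X × X // q.1 ≠ q.2})
    [IsLocallyFiniteMeasure J] [IsFiniteMeasureOnCompacts J] [J.InnerRegular]
    (hJsymm : Measure.map offDiagSwap J = J)
    (D : Subalgebra ℂ (X → ℂ))
    (hmeas : ∀ f ∈ D, Measurable f)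
    (hbdd : ∀ f ∈ D, ∃ C : ℝ, ∀ x, ‖f x‖ ≤ C)
    (hdense : ∀ g : C(X, ℂ), HasCompactSupport ⇑g → ∀ ε > 0,
      ∃ f ∈ D, Continuous f ∧ HasCompactSupport f ∧ ∀ x, ‖f x - g x‖ ≤ ε)
    (hL2 : ∀ f ∈ D,
      MemLp (fun p : {q : X × X // q.1 ≠ q.2} => f p.1.1 - f p.1.2) 2 J) :
    Dense (↑(Submodule.span ℂ
      {h : Lp ℂ 2 J | ∃ f ∈ D, ∃ g ∈ D,
        (∀ᵐ p ∂J, h p = f p.1.1 * (g p.1.1 - g p.1.2)) ∨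
        (∀ᵐ p ∂J, h p = g p.1.2 * (f p.1.1 - f p.1.2))}) : Set (Lp ℂ 2 J)) := by
  classical
  haveI : SecondCountableTopology X := UniformSpace.secondCountable_of_separable X
  rw [Submodule.dense_iff_topologicalClosure_eq_top, Submodule.topologicalClosure_eq_top_iff,
    Submodule.eq_bot_iff]
  intro v hv
  rw [Submodule.mem_orthogonal] at hv
  -- basic measurability
  have hvmeas : Measurable (⇑v : Om X → ℂ) := (Lp.stronglyMeasurable v).measurable
  have hcv : Measurable (fun ω : Om X => (starRingEnd ℂ) (v ω)) :=
    continuous_star.measurable.comp hvmeas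
  have hdfm : ∀ f ∈ D, Measurable (fun ω : Om X => f ω.1.1 - f ω.1.2) := fun f hf =>
    ((hmeas f hf).comp measurable_px).sub ((hmeas f hf).comp measurable_py)
  -- Memℒp facts
  have mtop1 : ∀ f ∈ D, MemLp (fun ω : Om X => f ω.1.1) ⊤ J := by
    intro f hf
    obtain ⟨C, hC⟩ := hbdd f hf
    exact memLp_top_of_bound ((hmeas f hf).comp measurable_px).aestronglyMeasurable C
      (Filter.Eventually.of_forall fun ω => hC _)
  have mtop2 : ∀ f ∈ D, MemLp (fun ω : Om X => f ω.1.2) ⊤ J := by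
    intro f hf
    obtain ⟨C, hC⟩ := hbdd f hf
    exact memLp_top_of_bound ((hmeas f hf).comp measurable_py).aestronglyMeasurable C
      (Filter.Eventually.of_forall fun ω => hC _)
  have mem1 : ∀ f ∈ D, ∀ g ∈ D,
      MemLp (fun ω : Om X => f ω.1.1 * (g ω.1.1 - g ω.1.2)) 2 J := by
    intro f hf g hg
    have h := (hL2 g hg).smul (mtop1 f hf) (r := 2)
    simpa [Pi.smul_apply', smul_eq_mul, Pi.mul_def] using h
  have mem2 : ∀ f ∈ D, ∀ g ∈ D,
      MemLp (fun ω : Om X => g ω.1.2 * (f ω.1.1 - f ω.1.2)) 2 J := by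
    intro f hf g hg
    have h := (hL2 f hf).smul (mtop2 g hg) (r := 2)
    simpa [Pi.smul_apply', smul_eq_mul, Pi.mul_def] using h
  have hv2 : MemLp (fun ω : Om X => (starRingEnd ℂ) (v ω)) 2 J :=
    (Lp.memLp v).of_le hcv.aestronglyMeasurable
      (Filter.Eventually.of_forall fun ω => by simp)
  have intCV : ∀ w : Om X → ℂ, MemLp w 2 J →
      Integrable (fun ω => (starRingEnd ℂ) (v ω) * w ω) J := by
    intro w hw
    have hpqr : (1:ℝ≥0∞)/1 = 1/2 + 1/2 := by
      rw [one_div_one]; exact (ENNReal.add_halves 1).symm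
    have h := hw.smul hv2 (r := 1)
    exact memLp_one_iff_integrable.mp (by simpa [Pi.smul_apply', smul_eq_mul, Pi.mul_def] using h)
  -- orthogonality against generators
  have pair : ∀ (u : Om X → ℂ) (hu : MemLp u 2 J),
      (MemLp.toLp u hu ∈ {h : Lp ℂ 2 J | ∃ f ∈ D, ∃ g ∈ D,
        (∀ᵐ p ∂J, h p = f p.1.1 * (g p.1.1 - g p.1.2)) ∨
        (∀ᵐ p ∂J, h p = g p.1.2 * (f p.1.1 - f p.1.2))}) →
      ∫ ω, (starRingEnd ℂ) (v ω) * u ω ∂J = 0 := by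
    intro u hu hmem
    have h1 : inner (𝕜 := ℂ) (MemLp.toLp u hu) v = 0 :=
      hv _ (Submodule.subset_span hmem)
    rw [inner_eq_zero_symm] at h1
    rw [L2.inner_def] at h1
    calc ∫ ω, (starRingEnd ℂ) (v ω) * u ω ∂J
        = ∫ ω, inner (𝕜 := ℂ) (v ω) ((MemLp.toLp u hu : Lp ℂ 2 J) ω) ∂J := by
          refine integral_congr_ae ?_
          filter_upwards [hu.coeFn_toLp] with ω hω
          rw [hω, RCLike.inner_apply, mul_comm]
      _ = 0 := h1
  have I1 : ∀ f ∈ D, ∀ g ∈ D,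
      ∫ ω, (starRingEnd ℂ) (v ω) * (f ω.1.1 * (g ω.1.1 - g ω.1.2)) ∂J = 0 := by
    intro f hf g hg
    exact pair _ (mem1 f hf g hg) ⟨f, hf, g, hg, Or.inl (mem1 f hf g hg).coeFn_toLp⟩
  have I2 : ∀ f ∈ D, ∀ g ∈ D,
      ∫ ω, (starRingEnd ℂ) (v ω) * (g ω.1.2 * (f ω.1.1 - f ω.1.2)) ∂J = 0 := by
    intro f hf g hg
    exact pair _ (mem2 f hf g hg) ⟨f, hf, g, hg, Or.inr (mem2 f hf g hg).coeFn_toLp⟩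
  -- tensors from D
  have I3 : ∀ p ∈ D, ∀ q ∈ D, ∀ f ∈ D,
      ∫ ω, (starRingEnd ℂ) (v ω) *
        (p ω.1.1 * q ω.1.2 * (f ω.1.1 - f ω.1.2)) ∂J = 0 := by
    intro p hp q hq f hf
    have h1 := I2 (p * f) (mul_mem hp hf) q hq
    have h2 := I2 p hp (q * f) (mul_mem hq hf)
    have hid : (fun ω : Om X => (starRingEnd ℂ) (v ω) *
        (p ω.1.1 * q ω.1.2 * (f ω.1.1 - f ω.1.2)))
        = fun ω : Om X => (starRingEnd ℂ) (v ω) *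
            (q ω.1.2 * ((p * f) ω.1.1 - (p * f) ω.1.2)) -
          (starRingEnd ℂ) (v ω) * ((q * f) ω.1.2 * (p ω.1.1 - p ω.1.2)) := by
      funext ω
      simp only [Pi.mul_apply]
      ring
    rw [hid, integral_sub (intCV _ (mem2 (p * f) (mul_mem hp hf) q hq))
      (intCV _ (mem2 p hp (q * f) (mul_mem hq hf))), h1, h2, sub_zero]
  -- tensors of continuous compactly supported functions
  have I4 : ∀ p q : X → ℂ, Continuous p → HasCompactSupport p →
      Continuous q → HasCompactSupport q → ∀ f ∈ D,
      ∫ ω, (starRingEnd ℂ) (v ω) *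
        (p ω.1.1 * q ω.1.2 * (f ω.1.1 - f ω.1.2)) ∂J = 0 := by
    intro p q hpc hpcs hqc hqcs f hf
    have hexp : ∀ k : ℕ, ∃ p', p' ∈ D ∧ Measurable p' ∧
        ∀ x, ‖p' x - p x‖ ≤ 1/((k:ℝ)+1) := by
      intro k
      obtain ⟨p', hp', _, _, hap⟩ := hdense ⟨p, hpc⟩ hpcs (1/((k:ℝ)+1)) (by positivity)
      exact ⟨p', hp', hmeas p' hp', hap⟩
    have hexq : ∀ k : ℕ, ∃ q', q' ∈ D ∧ Measurable q' ∧
        ∀ x, ‖q' x - q x‖ ≤ 1/((k:ℝ)+1) := by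
      intro k
      obtain ⟨q', hq', _, _, haq⟩ := hdense ⟨q, hqc⟩ hqcs (1/((k:ℝ)+1)) (by positivity)
      exact ⟨q', hq', hmeas q' hq', haq⟩
    choose ps hpsD hpsM hps using hexp
    choose qs hqsD hqsM hqs using hexq
    obtain ⟨Cp, hCp⟩ := hpc.bounded_above_of_compact_support hpcs
    obtain ⟨Cq, hCq⟩ := hqc.bounded_above_of_compact_support hqcs
    have hone : ∀ k : ℕ, (1:ℝ)/((k:ℝ)+1) ≤ 1 := by
      intro k
      rw [div_le_one (by positivity)]
      linarith [(Nat.cast_nonneg k : (0:ℝ) ≤ (k:ℝ))]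
    have hbp : ∀ k x, ‖ps k x‖ ≤ Cp + 1 := by
      intro k x
      calc ‖ps k x‖ = ‖(ps k x - p x) + p x‖ := by ring_nf
        _ ≤ ‖ps k x - p x‖ + ‖p x‖ := norm_add_le _ _
        _ ≤ 1/((k:ℝ)+1) + Cp := add_le_add (hps k x) (hCp x)
        _ ≤ Cp + 1 := by linarith [hone k]
    have hbq : ∀ k x, ‖qs k x‖ ≤ Cq + 1 := by
      intro k x
      calc ‖qs k x‖ = ‖(qs k x - q x) + q x‖ := by ring_nf
        _ ≤ ‖qs k x - q x‖ + ‖q x‖ := norm_add_le _ _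
        _ ≤ 1/((k:ℝ)+1) + Cq := add_le_add (hqs k x) (hCq x)
        _ ≤ Cq + 1 := by linarith [hone k]
    set ρ : Om X → ℂ := fun ω => (starRingEnd ℂ) (v ω) * (f ω.1.1 - f ω.1.2) with hρ
    have hρi : Integrable ρ J := intCV _ (hL2 f hf)
    have hlim := tendsto_integral_of_dominated_convergence (μ := J)
      (F := fun k (ω : Om X) => ps k ω.1.1 * qs k ω.1.2 * ρ ω)
      (f := fun ω : Om X => p ω.1.1 * q ω.1.2 * ρ ω)
      (fun ω => (Cp+1) * (Cq+1) * ‖ρ ω‖)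
      (fun k => ((((hpsM k).comp measurable_px).mul
        ((hqsM k).comp measurable_py)).mul (hcv.mul (hdfm f hf))).aestronglyMeasurable)
      ((hρi.norm.const_mul _))
      (by
        intro k
        refine Filter.Eventually.of_forall fun ω => ?_
        rw [norm_mul]
        have hnn : (0:ℝ) ≤ Cq + 1 := le_trans (norm_nonneg _) (hbq k ω.1.2)
        have h1 : ‖ps k ω.1.1 * qs k ω.1.2‖ ≤ (Cp+1)*(Cq+1) := by
          rw [norm_mul]
          exact mul_le_mul (hbp k _) (hbq k _) (norm_nonneg _)
            (le_trans (norm_nonneg _) (hbp k ω.1.1))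
        exact mul_le_mul_of_nonneg_right h1 (norm_nonneg _))
      (by
        refine Filter.Eventually.of_forall fun ω => ?_
        have hp1 : Tendsto (fun k => ps k ω.1.1) atTop (𝓝 (p ω.1.1)) := by
          rw [tendsto_iff_norm_sub_tendsto_zero]
          exact squeeze_zero (fun k => norm_nonneg _) (fun k => hps k _)
            tendsto_one_div_add_atTop_nhds_zero_nat
        have hq1 : Tendsto (fun k => qs k ω.1.2) atTop (𝓝 (q ω.1.2)) := by
          rw [tendsto_iff_norm_sub_tendsto_zero]
          exact squeeze_zero (fun k => norm_nonneg _) (fun k => hqs k _)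
            tendsto_one_div_add_atTop_nhds_zero_nat
        exact (hp1.mul hq1).mul tendsto_const_nhds)
    have hzk : ∀ k, ∫ ω, ps k ω.1.1 * qs k ω.1.2 * ρ ω ∂J = 0 := by
      intro k
      have h3 := I3 (ps k) (hpsD k) (qs k) (hqsD k) f hf
      rw [← h3]
      refine integral_congr_ae (Filter.Eventually.of_forall fun ω => ?_)
      rw [hρ]; ring
    rw [funext hzk] at hlim
    have htgt : ∫ ω, p ω.1.1 * q ω.1.2 * ρ ω ∂J = 0 :=
      tendsto_nhds_unique hlim tendsto_const_nhds
    rw [← htgt]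
    refine integral_congr_ae (Filter.Eventually.of_forall fun ω => ?_)
    rw [hρ]; ring
  -- compact rectangles
  have I5 : ∀ f ∈ D, ∀ A B : Set X, IsCompact A → IsCompact B →
      ∫ ω in (Subtype.val : Om X → X × X) ⁻¹' (A ×ˢ B),
        (starRingEnd ℂ) (v ω) * (f ω.1.1 - f ω.1.2) ∂J = 0 := by
    intro f hf A B hA hB
    rcases A.eq_empty_or_nonempty with rfl | hAne
    · simp [Set.empty_prod]
    rcases B.eq_empty_or_nonempty with rfl | hBne
    · simp [Set.prod_empty]
    obtain ⟨θA, hθA1, -, hθAcs, hθAicc⟩ :=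
      exists_continuous_one_zero_of_isCompact hA isClosed_empty (Set.disjoint_empty _)
    obtain ⟨θB, hθB1, -, hθBcs, hθBicc⟩ :=
      exists_continuous_one_zero_of_isCompact hB isClosed_empty (Set.disjoint_empty _)
    set tA : ℕ → X → ℝ :=
      fun k x => θA x * max 0 (1 - ((k:ℝ)+1) * Metric.infDist x A) with htA
    set tB : ℕ → X → ℝ :=
      fun k x => θB x * max 0 (1 - ((k:ℝ)+1) * Metric.infDist x B) with htB
    have htAc : ∀ k, Continuous (tA k) := fun k =>
      θA.continuous.mul (continuous_const.max (continuous_const.sub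
        (continuous_const.mul (Metric.continuous_infDist_pt A))))
    have htBc : ∀ k, Continuous (tB k) := fun k =>
      θB.continuous.mul (continuous_const.max (continuous_const.sub
        (continuous_const.mul (Metric.continuous_infDist_pt B))))
    have htAcs : ∀ k, HasCompactSupport (tA k) := fun k => hθAcs.mul_right
    have htBcs : ∀ k, HasCompactSupport (tB k) := fun k => hθBcs.mul_right
    have htA01 : ∀ k x, tA k x ∈ Set.Icc (0:ℝ) 1 := by
      intro k x
      have h1 := hθAicc x
      have h2 : max 0 (1 - ((k:ℝ)+1) * Metric.infDist x A) ∈ Set.Icc (0:ℝ) 1 := by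
        constructor
        · exact le_max_left _ _
        · refine max_le (by norm_num) ?_
          have : (0:ℝ) ≤ ((k:ℝ)+1) * Metric.infDist x A :=
            mul_nonneg (by positivity) Metric.infDist_nonneg
          linarith
      constructor
      · exact mul_nonneg h1.1 h2.1
      · calc θA x * max 0 (1 - ((k:ℝ)+1) * Metric.infDist x A) ≤ 1 * 1 :=
            mul_le_mul h1.2 h2.2 h2.1 (by norm_num)
          _ = 1 := by ring
    have htB01 : ∀ k x, tB k x ∈ Set.Icc (0:ℝ) 1 := by
      intro k x
      have h1 := hθBicc x
      have h2 : max 0 (1 - ((k:ℝ)+1) * Metric.infDist x B) ∈ Set.Icc (0:ℝ) 1 := by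
        constructor
        · exact le_max_left _ _
        · refine max_le (by norm_num) ?_
          have : (0:ℝ) ≤ ((k:ℝ)+1) * Metric.infDist x B :=
            mul_nonneg (by positivity) Metric.infDist_nonneg
          linarith
      constructor
      · exact mul_nonneg h1.1 h2.1
      · calc θB x * max 0 (1 - ((k:ℝ)+1) * Metric.infDist x B) ≤ 1 * 1 :=
            mul_le_mul h1.2 h2.2 h2.1 (by norm_num)
          _ = 1 := by ring
    -- pointwise limits
    have hlimA : ∀ x : X, Tendsto (fun k => tA k x) atTop
        (𝓝 (if x ∈ A then (1:ℝ) else 0)) := by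
      intro x
      by_cases hx : x ∈ A
      · have : ∀ k, tA k x = 1 := by
          intro k
          rw [htA]
          simp only
          rw [Metric.infDist_zero_of_mem hx, hθA1 hx]
          norm_num
        rw [if_pos hx]
        simpa [funext this] using (tendsto_const_nhds : Tendsto (fun _ : ℕ => (1:ℝ)) atTop _)
      · have hdx : 0 < Metric.infDist x A :=
          (hA.isClosed.notMem_iff_infDist_pos hAne).mp hx
        obtain ⟨N, hN⟩ := exists_nat_ge (1 / Metric.infDist x A)
        have hzero : ∀ k ≥ N, tA k x = 0 := by
          intro k hk
          have h1 : (1:ℝ) ≤ ((k:ℝ)+1) * Metric.infDist x A := by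
            have h2 : (1:ℝ)/Metric.infDist x A ≤ (k:ℝ)+1 := by
              have : (N:ℝ) ≤ (k:ℝ) := Nat.cast_le.mpr hk
              linarith
            rw [div_le_iff₀ hdx] at h2
            linarith [mul_le_mul_of_nonneg_right h2 (le_of_lt hdx)]
          rw [htA]
          simp only
          rw [max_eq_left (by linarith)]
          ring
        rw [if_neg hx]
        refine Tendsto.congr' ?_ (tendsto_const_nhds : Tendsto (fun _ : ℕ => (0:ℝ)) atTop _)
        exact (eventually_atTop.mpr ⟨N, fun k hk => (hzero k hk).symm⟩)
    have hlimB : ∀ x : X, Tendsto (fun k => tB k x) atTop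
        (𝓝 (if x ∈ B then (1:ℝ) else 0)) := by
      intro x
      by_cases hx : x ∈ B
      · have : ∀ k, tB k x = 1 := by
          intro k
          rw [htB]
          simp only
          rw [Metric.infDist_zero_of_mem hx, hθB1 hx]
          norm_num
        rw [if_pos hx]
        simpa [funext this] using (tendsto_const_nhds : Tendsto (fun _ : ℕ => (1:ℝ)) atTop _)
      · have hdx : 0 < Metric.infDist x B :=
          (hB.isClosed.notMem_iff_infDist_pos hBne).mp hx
        obtain ⟨N, hN⟩ := exists_nat_ge (1 / Metric.infDist x B)
        have hzero : ∀ k ≥ N, tB k x = 0 := by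
          intro k hk
          have h1 : (1:ℝ) ≤ ((k:ℝ)+1) * Metric.infDist x B := by
            have h2 : (1:ℝ)/Metric.infDist x B ≤ (k:ℝ)+1 := by
              have : (N:ℝ) ≤ (k:ℝ) := Nat.cast_le.mpr hk
              linarith
            rw [div_le_iff₀ hdx] at h2
            linarith [mul_le_mul_of_nonneg_right h2 (le_of_lt hdx)]
          rw [htB]
          simp only
          rw [max_eq_left (by linarith)]
          ring
        rw [if_neg hx]
        refine Tendsto.congr' ?_ (tendsto_const_nhds : Tendsto (fun _ : ℕ => (0:ℝ)) atTop _)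
        exact (eventually_atTop.mpr ⟨N, fun k hk => (hzero k hk).symm⟩)
    set ρ : Om X → ℂ := fun ω => (starRingEnd ℂ) (v ω) * (f ω.1.1 - f ω.1.2) with hρ
    have hρi : Integrable ρ J := intCV _ (hL2 f hf)
    have hρm : Measurable ρ := hcv.mul (hdfm f hf)
    have hSmeas := measurableSet_rect (X := X) hA hB
    -- dominated convergence towards the indicator
    have hlim := tendsto_integral_of_dominated_convergence (μ := J)
      (F := fun k (ω : Om X) => ((tA k ω.1.1 : ℝ) : ℂ) * ((tB k ω.1.2 : ℝ) : ℂ) * ρ ω)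
      (f := Set.indicator ((Subtype.val : Om X → X × X) ⁻¹' (A ×ˢ B)) ρ)
      (fun ω => ‖ρ ω‖)
      (fun k => (((Complex.measurable_ofReal.comp
          ((htAc k).measurable.comp measurable_px)).mul
        (Complex.measurable_ofReal.comp
          ((htBc k).measurable.comp measurable_py))).mul hρm).aestronglyMeasurable)
      hρi.norm
      (by
        intro k
        refine Filter.Eventually.of_forall fun ω => ?_
        rw [norm_mul, norm_mul]
        have h1 := htA01 k ω.1.1
        have h2 := htB01 k ω.1.2
        have e1 : ‖((tA k ω.1.1 : ℝ) : ℂ)‖ ≤ 1 := by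
          rw [Complex.norm_real, Real.norm_eq_abs, abs_of_nonneg h1.1]; exact h1.2
        have e2 : ‖((tB k ω.1.2 : ℝ) : ℂ)‖ ≤ 1 := by
          rw [Complex.norm_real, Real.norm_eq_abs, abs_of_nonneg h2.1]; exact h2.2
        calc ‖((tA k ω.1.1 : ℝ) : ℂ)‖ * ‖((tB k ω.1.2 : ℝ) : ℂ)‖ * ‖ρ ω‖
            ≤ 1 * 1 * ‖ρ ω‖ := by
              refine mul_le_mul_of_nonneg_right ?_ (norm_nonneg _)
              exact mul_le_mul e1 e2 (norm_nonneg _) (by norm_num)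
          _ = ‖ρ ω‖ := by ring)
      (by
        refine Filter.Eventually.of_forall fun ω => ?_
        have h1 : Tendsto (fun k => ((tA k ω.1.1 : ℝ) : ℂ)) atTop
            (𝓝 (((if ω.1.1 ∈ A then (1:ℝ) else 0) : ℝ) : ℂ)) := by
          simpa [Function.comp_def] using
            (Complex.continuous_ofReal.tendsto _).comp (hlimA ω.1.1)
        have h2 : Tendsto (fun k => ((tB k ω.1.2 : ℝ) : ℂ)) atTop
            (𝓝 (((if ω.1.2 ∈ B then (1:ℝ) else 0) : ℝ) : ℂ)) := by
          simpa [Function.comp_def] using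
            (Complex.continuous_ofReal.tendsto _).comp (hlimB ω.1.2)
        have h3 := (h1.mul h2).mul (tendsto_const_nhds (x := ρ ω))
        have e : ((if ω.1.1 ∈ A then (1:ℝ) else 0 : ℝ) : ℂ) *
            ((if ω.1.2 ∈ B then (1:ℝ) else 0 : ℝ) : ℂ) * ρ ω
            = Set.indicator ((Subtype.val : Om X → X × X) ⁻¹' (A ×ˢ B)) ρ ω := by
          by_cases hx : ω.1.1 ∈ A <;> by_cases hy : ω.1.2 ∈ B <;>
            simp [Set.indicator_apply, Set.mem_preimage, Set.mem_prod, hx, hy]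
        rw [← e]
        exact h3)
    have hzk : ∀ k, ∫ ω, ((tA k ω.1.1 : ℝ) : ℂ) * ((tB k ω.1.2 : ℝ) : ℂ) * ρ ω ∂J = 0 := by
      intro k
      have h4 := I4 (fun x => ((tA k x : ℝ) : ℂ)) (fun x => ((tB k x : ℝ) : ℂ))
        (Complex.continuous_ofReal.comp (htAc k))
        ((htAcs k).comp_left (g := Complex.ofReal) Complex.ofReal_zero)
        (Complex.continuous_ofReal.comp (htBc k))
        ((htBcs k).comp_left (g := Complex.ofReal) Complex.ofReal_zero) f hf
      rw [← h4]
      refine integral_congr_ae (Filter.Eventually.of_forall fun ω => ?_)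
      rw [hρ]; ring
    rw [funext hzk] at hlim
    have htgt := tendsto_nhds_unique hlim tendsto_const_nhds
    rw [← integral_indicator hSmeas, ← hρ]
    exact htgt
  -- conj v * df vanishes a.e. for every f in D
  have hae : ∀ f ∈ D,
      (fun ω : Om X => (starRingEnd ℂ) (v ω) * (f ω.1.1 - f ω.1.2)) =ᵐ[J] 0 := by
    intro f hf
    exact ae_zero_of_forall_compactRect (hcv.mul (hdfm f hf)) (intCV _ (hL2 f hf)) (I5 f hf)
  -- conclude v = 0
  rw [Lp.eq_zero_iff_ae_eq_zero]
  by_cases hXne : Nonempty X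
  swap
  · haveI : IsEmpty X := not_nonempty_iff.mp hXne
    exact Filter.Eventually.of_forall fun ω => (IsEmpty.false ω.1.1).elim
  -- countable separating family
  have hxs := TopologicalSpace.denseRange_denseSeq X
  set xs := TopologicalSpace.denseSeq X with hxsdef
  have hch : ∀ (n : ℕ) (q : ℚ), ∃ g, g ∈ D ∧
      ((0 < (q:ℝ) ∧ IsCompact (Metric.closedBall (xs n) (q:ℝ))) →
        ∀ x, ‖g x - ((max 0 (1 - dist x (xs n) / (q:ℝ)) : ℝ) : ℂ)‖ ≤ 1/10) := by
    intro n q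
    by_cases hc : 0 < (q:ℝ) ∧ IsCompact (Metric.closedBall (xs n) (q:ℝ))
    · have hcont : Continuous fun x : X =>
          ((max 0 (1 - dist x (xs n) / (q:ℝ)) : ℝ) : ℂ) :=
        Complex.continuous_ofReal.comp (continuous_const.max (continuous_const.sub
          ((continuous_id.dist continuous_const).div_const _)))
      have hcs : HasCompactSupport fun x : X =>
          ((max 0 (1 - dist x (xs n) / (q:ℝ)) : ℝ) : ℂ) := by
        refine HasCompactSupport.intro hc.2 fun x hx => ?_
        have hd : (q:ℝ) < dist x (xs n) := by
          by_contra hle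
          exact hx (Metric.mem_closedBall.mpr (not_lt.mp hle))
        have hnn : 1 - dist x (xs n) / (q:ℝ) ≤ 0 := by
          rw [sub_nonpos, le_div_iff₀ hc.1, one_mul]
          exact hd.le
        rw [max_eq_left hnn]
        simp
      obtain ⟨g, hg, -, -, hap⟩ := hdense ⟨_, hcont⟩ hcs (1/10) (by norm_num)
      exact ⟨g, hg, fun _ => hap⟩
    · exact ⟨0, zero_mem D, fun h => absurd h hc⟩
  choose gs hgsD hgs using hch
  have haeall : ∀ᵐ ω ∂J, ∀ (n : ℕ) (q : ℚ),
      (starRingEnd ℂ) (v ω) * (gs n q ω.1.1 - gs n q ω.1.2) = 0 := by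
    rw [ae_all_iff]
    intro n
    rw [ae_all_iff]
    intro q
    filter_upwards [hae (gs n q) (hgsD n q)] with ω hω
    simpa using hω
  filter_upwards [haeall] with ω hω
  simp only [Pi.zero_apply]
  -- pointwise argument
  have hxy : ω.1.1 ≠ ω.1.2 := ω.2
  have hδ : 0 < dist ω.1.1 ω.1.2 := dist_pos.mpr hxy
  obtain ⟨K, hKc, hKn⟩ := exists_compact_mem_nhds ω.1.1
  obtain ⟨ε, hε0, hεK⟩ := Metric.mem_nhds_iff.mp hKn
  set x := ω.1.1
  set y := ω.1.2
  set r := min (ε/2) (dist x y / 4) with hrdef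
  have hr0 : 0 < r := lt_min (by positivity) (by positivity)
  have hrd : r ≤ dist x y / 4 := min_le_right _ _
  have hrball : Metric.closedBall x r ⊆ K := by
    refine subset_trans (Metric.closedBall_subset_ball ?_) hεK
    calc r ≤ ε/2 := min_le_left _ _
      _ < ε := by linarith
  obtain ⟨n, hn⟩ : ∃ n, dist x (xs n) < r/4 :=
    hxs.exists_dist_lt x (by positivity : (0:ℝ) < r/4)
  obtain ⟨q, hq1, hq2⟩ := exists_rat_btwn (show r/2 < 3*r/4 by linarith)
  have hq0 : 0 < (q:ℝ) := lt_trans (by positivity) hq1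
  have hqcomp : IsCompact (Metric.closedBall (xs n) (q:ℝ)) := by
    refine IsCompact.of_isClosed_subset hKc Metric.isClosed_closedBall ?_
    refine subset_trans ?_ hrball
    intro z hz
    rw [Metric.mem_closedBall] at hz ⊢
    calc dist z x ≤ dist z (xs n) + dist (xs n) x := dist_triangle _ _ _
      _ ≤ (q:ℝ) + dist (xs n) x := by linarith
      _ ≤ (q:ℝ) + r/4 := by
          rw [dist_comm]
          linarith
      _ ≤ r := by linarith
  have happ := hgs n q ⟨hq0, hqcomp⟩
  set t : X → ℝ := fun z => max 0 (1 - dist z (xs n) / (q:ℝ)) with htdef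
  have htx : 1/2 ≤ t x := by
    have hd2 : dist x (xs n) / (q:ℝ) ≤ 1/2 := by
      rw [div_le_iff₀ hq0]
      calc dist x (xs n) ≤ r/4 := hn.le
        _ = 1/2 * (r/2) := by ring
        _ ≤ 1/2 * (q:ℝ) := by nlinarith
    calc (1:ℝ)/2 = 1 - 1/2 := by norm_num
      _ ≤ 1 - dist x (xs n) / (q:ℝ) := by linarith
      _ ≤ t x := le_max_right _ _
  have hty : t y = 0 := by
    have hdy : (q:ℝ) ≤ dist y (xs n) := by
      have h1 : dist x y ≤ dist x (xs n) + dist (xs n) y :=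
        dist_triangle _ _ _
      have h2 : 4*r ≤ dist x y := by linarith
      have h3 : dist y (xs n) = dist (xs n) y := dist_comm _ _
      nlinarith
    have : 1 - dist y (xs n) / (q:ℝ) ≤ 0 := by
      rw [sub_nonpos, le_div_iff₀ hq0, one_mul]
      exact hdy
    exact max_eq_left this
  have hdiff : gs n q x - gs n q y ≠ 0 := by
    intro h0
    have h1 := happ x
    have h2 := happ y
    have e1 : ((t x : ℝ) : ℂ) - ((t y : ℝ) : ℂ) =
        (gs n q y - ((t y : ℝ) : ℂ)) - (gs n q x - ((t x : ℝ) : ℂ)) + (gs n q x - gs n q y) := by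
      ring
    have e2 : ‖((t x : ℝ) : ℂ) - ((t y : ℝ) : ℂ)‖ ≤ 1/10 + 1/10 := by
      rw [e1, h0, add_zero]
      calc ‖(gs n q y - ((t y : ℝ) : ℂ)) - (gs n q x - ((t x : ℝ) : ℂ))‖
          ≤ ‖gs n q y - ((t y : ℝ) : ℂ)‖ + ‖gs n q x - ((t x : ℝ) : ℂ)‖ := norm_sub_le _ _
        _ ≤ 1/10 + 1/10 := add_le_add h2 h1
    have e3 : ‖((t x : ℝ) : ℂ) - ((t y : ℝ) : ℂ)‖ = |t x - t y| := by
      rw [← Complex.ofReal_sub, Complex.norm_real, Real.norm_eq_abs]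
    rw [e3, hty, sub_zero] at e2
    have : t x ≤ 1/5 := by
      calc t x ≤ |t x| := le_abs_self _
        _ ≤ 1/10 + 1/10 := e2
        _ = 1/5 := by norm_num
    linarith
  rcases mul_eq_zero.mp (hω n q) with h | h
  · simpa using h
  · exact absurd h hdiff
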